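/- Let d ≥ 2 and let v : (0,∞) → ℝ be continuous with: (i) there exist C > 0 and s ∈ (0,2) such that v(r) ≥ -C·r^{-s} for r ∈ (0,1]; (ii) there exist c > 0, m > 1 and R > 0 such that c·r^m ≤ v(r) ≤ (1/c)·r^m for all r ≥ R. For λ ∈ ℝ define p_λ := sup{ℓ ∈ ℕ : ℓ ≥ 1 and inf_{r>0}(v(r) + ℓ(ℓ+d-2)/r²) < λ}. Then there exist K ≥ 1 and λ₀ > 0 such that for all λ ≥ λ₀, (1/K)·λ^{(m+2)/(2m)} ≤ p_λ ≤ K·λ^{(m+2)/(2m)}. -/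

import Mathlib

set_option maxHeartbeats 1000000 in
lemma pw_lower (d : ℕ) (hd : 2 ≤ d) (v : ℝ → ℝ)
    (C s : ℝ) (hC : 0 < C) (hs0 : 0 < s) (hs2 : s < 2)
    (hlow : ∀ r ∈ Set.Ioc (0:ℝ) 1, v r ≥ -C * r ^ (-s))
    (c m R : ℝ) (hc : 0 < c) (hm : 1 < m) (hR : 0 < R)
    (hgrow : ∀ r ≥ R, c * r ^ m ≤ v r ∧ v r ≤ (1/c) * r ^ m)
    (M : ℝ) (hM0 : 0 ≤ M) (hM : ∀ r ∈ Set.Icc (1:ℝ) (max R 1), -M ≤ v r)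
    (ℓ : ℕ) (hℓ : 1 ≤ ℓ) (r : ℝ) (hr : 0 < r) :
    min (min (1/2) (1/(max R 1)^2)) (min c 1) * (ℓ:ℝ) ^ (2*m/(m+2))
      - max (C*(2*C)^(s/(2-s))) M
      ≤ v r + (ℓ : ℝ) * ((ℓ : ℝ) + (d : ℝ) - 2) / r ^ 2 := by
  have hR'1 : (1:ℝ) ≤ max R 1 := le_max_right _ _
  have hR'0 : (0:ℝ) < max R 1 := lt_of_lt_of_le one_pos hR'1
  set R' := max R 1 with hR'def
  set a := min (min (1/2) (1/R'^2)) (min c 1) with hadef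
  set b₀ := C*(2*C)^(s/(2-s)) with hb₀def
  set q := 2*m/(m+2) with hqdef
  have hm2 : (0:ℝ) < m + 2 := by linarith
  have hm0 : (0:ℝ) < m := by linarith
  have hq0 : 0 < q := by positivity
  have hq2 : q ≤ 2 := by rw [hqdef, div_le_iff₀ hm2]; nlinarith
  have hℓ1 : (1:ℝ) ≤ (ℓ:ℝ) := by exact_mod_cast hℓ
  have hℓ0 : (0:ℝ) < (ℓ:ℝ) := lt_of_lt_of_le one_pos hℓ1
  have hd2 : (2:ℝ) ≤ (d:ℝ) := by exact_mod_cast hd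
  set L := (ℓ:ℝ) * ((ℓ:ℝ) + (d:ℝ) - 2) with hLdef
  have hLsq : (ℓ:ℝ)^(2:ℕ) ≤ L := by rw [hLdef]; nlinarith
  have hLq : (ℓ:ℝ)^q ≤ L := by
    calc (ℓ:ℝ)^q ≤ (ℓ:ℝ)^((2:ℝ)) := Real.rpow_le_rpow_of_exponent_le hℓ1 hq2
    _ = (ℓ:ℝ)^(2:ℕ) := by rw [← Real.rpow_natCast (ℓ:ℝ) 2]; norm_num
    _ ≤ L := hLsq
  have hq1 : (1:ℝ) ≤ (ℓ:ℝ)^q := Real.one_le_rpow hℓ1 hq0.le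
  have hqpos : (0:ℝ) < (ℓ:ℝ)^q := lt_of_lt_of_le one_pos hq1
  have hL1 : (1:ℝ) ≤ L := le_trans hq1 hLq
  have hL0 : (0:ℝ) < L := lt_of_lt_of_le one_pos hL1
  have hb₀0 : 0 ≤ b₀ := by positivity
  have hb : b₀ ≤ max b₀ M := le_max_left _ _
  have hbM : M ≤ max b₀ M := le_max_right _ _
  have hb0 : 0 ≤ max b₀ M := le_trans hb₀0 hb
  have ha_half : a ≤ 1/2 := le_trans (min_le_left _ _) (min_le_left _ _)
  have ha_R : a ≤ 1/R'^2 := le_trans (min_le_left _ _) (min_le_right _ _)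
  have ha_c : a ≤ c := le_trans (min_le_right _ _) (min_le_left _ _)
  have ha_one : a ≤ 1 := le_trans (min_le_right _ _) (min_le_right _ _)
  have hr2 : (0:ℝ) < r^2 := by positivity
  -- generic fact: ℓ^q ≤ L^{m/(m+2)}
  have hℓqL : (ℓ:ℝ)^q ≤ L^(m/(m+2)) := by
    have h6 : ((ℓ:ℝ)^((2:ℝ)))^(m/(m+2)) ≤ L^(m/(m+2)) := by
      apply Real.rpow_le_rpow (by positivity) _ (by positivity)
      rw [show ((2:ℝ)) = ((2:ℕ):ℝ) by norm_num, Real.rpow_natCast]; exact hLsq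
    rwa [← Real.rpow_mul (Nat.cast_nonneg ℓ),
      show (2:ℝ)*(m/(m+2)) = q by rw [hqdef]; ring] at h6
  rcases le_or_gt r 1 with h1 | h1
  · -- r ≤ 1
    have hvr : v r ≥ -C * r ^ (-s) := hlow r ⟨hr, h1⟩
    have hr21 : r^2 ≤ 1 := by nlinarith
    have hrs : 0 < r ^ (-s) := Real.rpow_pos_of_pos hr _
    rcases le_or_gt (C * r^(-s)) ((L/2)/r^2) with hcs | hcs
    · have h2 : L/2 ≤ (L/2)/r^2 := by
        rw [le_div_iff₀ hr2]; exact mul_le_of_le_one_right (by positivity) hr21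
      have h3 : a * (ℓ:ℝ)^q ≤ L/2 := by
        calc a * (ℓ:ℝ)^q ≤ (1/2) * (ℓ:ℝ)^q := mul_le_mul_of_nonneg_right ha_half hqpos.le
        _ ≤ (1/2) * L := mul_le_mul_of_nonneg_left hLq (by norm_num)
        _ = L/2 := by ring
      have h4 : L/r^2 - (L/2)/r^2 = (L/2)/r^2 := by ring
      linarith
    · have h2s : (0:ℝ) < 2 - s := by linarith
      have key : (2*C)⁻¹ ≤ r^(2-s) := by
        have e1 : (1/2)/r^2 ≤ (L/2)/r^2 := by gcongr
        have e2 : (1/2)/r^2 < C * r^(-s) := lt_of_le_of_lt e1 hcs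
        have e3 : (1:ℝ)/2 < C * r^(-s) * r^2 := by rwa [div_lt_iff₀ hr2] at e2
        have e4 : r^(-s) * r^2 = r^(2-s) := by
          rw [show r^2 = r^((2:ℝ)) by rw [← Real.rpow_natCast r 2]; norm_num,
            ← Real.rpow_add hr]; ring_nf
        have e5 : (1:ℝ) ≤ 2*C*r^(2-s) := by rw [← e4]; linarith
        have e6 := mul_le_mul_of_nonneg_left e5
          (le_of_lt (inv_pos.mpr (show (0:ℝ) < 2*C by positivity)))
        rw [mul_one] at e6
        calc (2*C)⁻¹ ≤ (2*C)⁻¹ * (2*C*r^(2-s)) := e6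
        _ = r^(2-s) := by field_simp
      have h5 : ((2*C)⁻¹) ^ ((2-s)⁻¹) ≤ r := by
        have h6 := Real.rpow_le_rpow (by positivity : (0:ℝ) ≤ (2*C)⁻¹) key
          (by positivity : (0:ℝ) ≤ (2-s)⁻¹)
        rwa [← Real.rpow_mul hr.le, mul_inv_cancel₀ h2s.ne', Real.rpow_one] at h6
      have h7 : r^(-s) ≤ (2*C)^(s/(2-s)) := by
        have h8 : r^(-s) ≤ (((2*C)⁻¹)^((2-s)⁻¹))^(-s) :=
          Real.rpow_le_rpow_of_nonpos (by positivity) h5 (by linarith)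
        have h9 : (((2*C)⁻¹)^((2-s)⁻¹))^(-s) = (2*C)^(s/(2-s)) := by
          rw [← Real.rpow_neg_one (2*C), ← Real.rpow_mul (by positivity : (0:ℝ) ≤ 2*C),
            ← Real.rpow_mul (by positivity : (0:ℝ) ≤ 2*C)]
          congr 1
          field_simp
        rwa [h9] at h8
      have h10 : C * r^(-s) ≤ b₀ := by
        rw [hb₀def]; exact mul_le_mul_of_nonneg_left h7 hC.le
      have h11 : L ≤ L/r^2 := by
        rw [le_div_iff₀ hr2]; exact mul_le_of_le_one_right hL0.le hr21
      have h12 : a * (ℓ:ℝ)^q ≤ L :=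
        le_trans (mul_le_of_le_one_left hqpos.le ha_one) hLq
      linarith
  · rcases le_or_gt r R' with h2 | h2
    · have hvr : -M ≤ v r := hM r ⟨h1.le, h2⟩
      have hLrR : L/R'^2 ≤ L/r^2 := by gcongr
      have h3 : a * (ℓ:ℝ)^q ≤ L/R'^2 := by
        calc a * (ℓ:ℝ)^q ≤ (1/R'^2) * (ℓ:ℝ)^q := mul_le_mul_of_nonneg_right ha_R hqpos.le
        _ ≤ (1/R'^2) * L := mul_le_mul_of_nonneg_left hLq (by positivity)
        _ = L/R'^2 := by ring
      linarith
    · have hrR : R ≤ r := le_trans (le_max_left R 1) h2.le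
      have hone : (1:ℝ) < r := lt_of_le_of_lt hR'1 h2
      have hcv : c * r ^ m ≤ v r := (hgrow r hrR).1
      have hrm : (0:ℝ) < r ^ m := Real.rpow_pos_of_pos hr _
      rcases le_or_gt L (r^(m+2)) with hcase | hcase
      · have h3 : L^(m/(m+2)) ≤ r^m := by
          have h4 := Real.rpow_le_rpow hL0.le hcase (by positivity : (0:ℝ) ≤ m/(m+2))
          rwa [← Real.rpow_mul hr.le, show (m+2)*(m/(m+2)) = m by field_simp] at h4
        have h7 : a * (ℓ:ℝ)^q ≤ c * (ℓ:ℝ)^q := mul_le_mul_of_nonneg_right ha_c hqpos.le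
        have h8 : c * (ℓ:ℝ)^q ≤ c * r^m :=
          mul_le_mul_of_nonneg_left (le_trans hℓqL h3) hc.le
        have h9 : 0 ≤ L/r^2 := (div_pos hL0 hr2).le
        linarith
      · have h3 : r^2 ≤ L^(2/(m+2)) := by
          have h4 := Real.rpow_le_rpow (by positivity : (0:ℝ) ≤ r^(m+2)) hcase.le
            (by positivity : (0:ℝ) ≤ 2/(m+2))
          rwa [← Real.rpow_mul hr.le, show (m+2)*(2/(m+2)) = (2:ℝ) by field_simp,
            show r^((2:ℝ)) = r^(2:ℕ) by rw [← Real.rpow_natCast r 2]; norm_num] at h4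
        have h5 : L^(m/(m+2)) ≤ L/r^2 := by
          have e : L^(m/(m+2)) = L / L^(2/(m+2)) := by
            rw [show m/(m+2) = 1 - 2/(m+2) by field_simp; ring, Real.rpow_sub hL0,
              Real.rpow_one]
          rw [e]; gcongr
        have h7 : 0 ≤ v r := le_trans (mul_pos hc hrm).le hcv
        have h8 : a * (ℓ:ℝ)^q ≤ (ℓ:ℝ)^q := mul_le_of_le_one_left hqpos.le ha_one
        linarith
set_option maxHeartbeats 1000000 in
/-- Corollary 3.7 (Case A): the maximal degree `p_λ` of spherical harmonics occurring in
an eigenfunction with eigenvalue `λ` satisfies `p_λ ≍ λ^{(m+2)/(2m)}` as `λ → +∞`. -/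
theorem stmt12 (d : ℕ) (hd : 2 ≤ d) (v : ℝ → ℝ) (hv : ContinuousOn v (Set.Ioi 0))
    (C s : ℝ) (hC : 0 < C) (hs : s ∈ Set.Ioo (0 : ℝ) 2)
    (hlow : ∀ r ∈ Set.Ioc (0 : ℝ) 1, v r ≥ -C * r ^ (-s))
    (c m R : ℝ) (hc : 0 < c) (hm : 1 < m) (hR : 0 < R)
    (hgrow : ∀ r ≥ R, c * r ^ m ≤ v r ∧ v r ≤ (1 / c) * r ^ m) :
    ∃ K ≥ (1 : ℝ), ∃ lam₀ > (0 : ℝ), ∀ lam ≥ lam₀,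
      (1 / K) * lam ^ ((m + 2) / (2 * m)) ≤
        ((sSup {ℓ : ℕ | 1 ≤ ℓ ∧
          sInf ((fun r : ℝ => v r + (ℓ : ℝ) * ((ℓ : ℝ) + (d : ℝ) - 2) / r ^ 2) ''
            Set.Ioi 0) < lam} : ℕ) : ℝ) ∧
      ((sSup {ℓ : ℕ | 1 ≤ ℓ ∧
          sInf ((fun r : ℝ => v r + (ℓ : ℝ) * ((ℓ : ℝ) + (d : ℝ) - 2) / r ^ 2) ''
            Set.Ioi 0) < lam} : ℕ) : ℝ) ≤ K * lam ^ ((m + 2) / (2 * m)) := by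
  obtain ⟨hs0, hs2⟩ := hs
  have hm0 : (0:ℝ) < m := by linarith
  have hm2 : (0:ℝ) < m + 2 := by linarith
  set q := 2*m/(m+2) with hqdef
  set α := (m+2)/(2*m) with hαdef
  have hq0 : 0 < q := by positivity
  have hq2 : q ≤ 2 := by rw [hqdef, div_le_iff₀ hm2]; nlinarith
  have hα0 : 0 < α := by positivity
  have hqα : q * α = 1 := by rw [hqdef, hαdef]; field_simp
  clear_value q α
  have hR'1 : (1:ℝ) ≤ max R 1 := le_max_right _ _
  have hR'0 : (0:ℝ) < max R 1 := lt_of_lt_of_le one_pos hR'1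
  set R' := max R 1 with hR'def
  clear_value R'
  obtain ⟨M₀, hM₀⟩ := (isCompact_Icc : IsCompact (Set.Icc (1:ℝ) R')).exists_bound_of_continuousOn
    (hv.mono (fun x hx => lt_of_lt_of_le one_pos hx.1))
  set M := max M₀ 0 with hMdef
  have hM0 : (0:ℝ) ≤ M := le_max_right _ _
  have hM : ∀ r ∈ Set.Icc (1:ℝ) R', -M ≤ v r := by
    intro r hrr
    have h := hM₀ r hrr
    rw [Real.norm_eq_abs] at h
    have h2 : |v r| ≤ M := le_trans h (le_max_left _ _)
    linarith [(abs_le.mp h2).1]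
  clear_value M
  set a := min (min (1/2) (1/R'^2)) (min c 1) with hadef
  set b := max (C*(2*C)^(s/(2-s))) M with hbdef
  have ha0 : (0:ℝ) < a := by
    rw [hadef]
    exact lt_min (lt_min (by norm_num) (by positivity)) (lt_min hc one_pos)
  have hb0 : (0:ℝ) ≤ b := le_trans hM0 (by rw [hbdef]; exact le_max_right _ _)
  clear_value a b
  set B := 1/c + ((d:ℝ) - 1) with hBdef
  have hd2 : (2:ℝ) ≤ (d:ℝ) := by exact_mod_cast hd
  have hB1 : (1:ℝ) ≤ B := by
    have h1 : (0:ℝ) < 1/c := by positivity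
    rw [hBdef]; linarith
  have hB0 : (0:ℝ) < B := lt_of_lt_of_le one_pos hB1
  clear_value B
  set T := R'^((m+2)/2) with hTdef
  have hT1 : (1:ℝ) ≤ T := by
    rw [hTdef]
    exact Real.one_le_rpow hR'1 (by positivity)
  clear_value T
  have keyBdd : ∀ ℓ : ℕ, 1 ≤ ℓ →
      ∀ y ∈ ((fun r : ℝ => v r + (ℓ:ℝ)*((ℓ:ℝ)+(d:ℝ)-2)/r^2) '' Set.Ioi 0),
        a * (ℓ:ℝ)^q - b ≤ y := by
    rintro ℓ hℓ y ⟨r, hrm, rfl⟩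
    have hpw := pw_lower d hd v C s hC hs0 hs2 hlow c m R hc hm hR hgrow M hM0
      (by rw [hR'def] at hM; exact hM) ℓ hℓ r hrm
    rw [hadef, hbdef, hqdef, hR'def]
    exact hpw
  have keyBdd' : ∀ ℓ : ℕ, 1 ≤ ℓ →
      BddBelow ((fun r : ℝ => v r + (ℓ:ℝ)*((ℓ:ℝ)+(d:ℝ)-2)/r^2) '' Set.Ioi 0) :=
    fun ℓ hℓ => ⟨a * (ℓ:ℝ)^q - b, keyBdd ℓ hℓ⟩
  have key : ∀ ℓ : ℕ, 1 ≤ ℓ →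
      a * (ℓ:ℝ)^q - b ≤
        sInf ((fun r : ℝ => v r + (ℓ:ℝ)*((ℓ:ℝ)+(d:ℝ)-2)/r^2) '' Set.Ioi 0) := by
    intro ℓ hℓ
    exact le_csInf ⟨_, Set.mem_image_of_mem _ (Set.mem_Ioi.mpr one_pos)⟩ (keyBdd ℓ hℓ)
  refine ⟨max ((8*B)^α) ((2/a)^α), ?_, max (8*B*T^q) (max b 1), ?_, ?_⟩
  · exact le_trans (Real.one_le_rpow (by linarith) hα0.le) (le_max_left _ _)
  · exact lt_of_lt_of_le one_pos (le_trans (le_max_right _ _) (le_max_right _ _))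
  intro lam hlam
  set K := max ((8*B)^α) ((2/a)^α) with hKdef
  clear_value K
  have hlam1 : (1:ℝ) ≤ lam := le_trans (le_trans (le_max_right _ _) (le_max_right _ _)) hlam
  have hlam0 : (0:ℝ) < lam := lt_of_lt_of_le one_pos hlam1
  have hlamb : b ≤ lam := le_trans (le_trans (le_max_left _ _) (le_max_right _ _)) hlam
  have hlamT : 8*B*T^q ≤ lam := le_trans (le_max_left _ _) hlam
  set θ := (lam/(8*B))^α with hθdef
  clear_value θ
  have hθT : T ≤ θ := by
    have h1 : T^q ≤ lam/(8*B) := by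
      rw [le_div_iff₀ (by linarith : (0:ℝ) < 8*B)]; linarith
    have h2 := Real.rpow_le_rpow (Real.rpow_nonneg (by linarith) q) h1 hα0.le
    rw [← Real.rpow_mul (by linarith : (0:ℝ) ≤ T), hqα, Real.rpow_one] at h2
    rw [hθdef]
    exact h2
  have hθ1 : (1:ℝ) ≤ θ := le_trans hT1 hθT
  have hθ0 : (0:ℝ) < θ := lt_of_lt_of_le one_pos hθ1
  set ℓ₀ := ⌈θ⌉₊ with hℓ₀def
  have hℓ₀1 : 1 ≤ ℓ₀ := Nat.ceil_pos.mpr hθ0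
  have hθℓ : θ ≤ (ℓ₀:ℝ) := Nat.le_ceil θ
  have hℓ2θ : (ℓ₀:ℝ) ≤ 2*θ := by
    have := Nat.ceil_lt_add_one hθ0.le
    have h2 : θ + 1 ≤ 2*θ := by linarith
    linarith
  have hℓ₀pos : (0:ℝ) < (ℓ₀:ℝ) := lt_of_lt_of_le hθ0 hθℓ
  set r₀ := (ℓ₀:ℝ)^(2/(m+2)) with hr₀def
  have hr₀pos : 0 < r₀ := Real.rpow_pos_of_pos hℓ₀pos _
  have hr₀R : R ≤ r₀ := by
    have h1 : T ≤ (ℓ₀:ℝ) := le_trans hθT hθℓ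
    have h2 := Real.rpow_le_rpow (by linarith : (0:ℝ) ≤ T) h1
      (by positivity : (0:ℝ) ≤ 2/(m+2))
    have h3 : T^(2/(m+2)) = R' := by
      rw [hTdef, ← Real.rpow_mul hR'0.le,
        show (m+2)/2*(2/(m+2)) = (1:ℝ) by field_simp, Real.rpow_one]
    calc R ≤ R' := by rw [hR'def]; exact le_max_left _ _
    _ = T^(2/(m+2)) := h3.symm
    _ ≤ r₀ := h2
  have hub : sInf ((fun r : ℝ => v r + (ℓ₀:ℝ)*((ℓ₀:ℝ)+(d:ℝ)-2)/r^2) '' Set.Ioi 0) < lam := by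
    have h1 : sInf ((fun r : ℝ => v r + (ℓ₀:ℝ)*((ℓ₀:ℝ)+(d:ℝ)-2)/r^2) '' Set.Ioi 0)
        ≤ v r₀ + (ℓ₀:ℝ)*((ℓ₀:ℝ)+(d:ℝ)-2)/r₀^2 :=
      csInf_le (keyBdd' ℓ₀ hℓ₀1) (Set.mem_image_of_mem _ (Set.mem_Ioi.mpr hr₀pos))
    have hv1 : v r₀ ≤ (1/c) * r₀^m := (hgrow r₀ hr₀R).2
    have hrmq : r₀^m = (ℓ₀:ℝ)^q := by
      rw [hr₀def, ← Real.rpow_mul (Nat.cast_nonneg _)]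
      congr 1
      rw [hqdef]; ring
    have hr₀2 : r₀^(2:ℕ) = (ℓ₀:ℝ)^(4/(m+2)) := by
      rw [hr₀def, ← Real.rpow_natCast ((ℓ₀:ℝ)^(2/(m+2))) 2,
        ← Real.rpow_mul (Nat.cast_nonneg _)]
      congr 1
      ring
    have hℓ1' : (1:ℝ) ≤ (ℓ₀:ℝ) := by exact_mod_cast hℓ₀1
    have hL2 : (ℓ₀:ℝ)*((ℓ₀:ℝ)+(d:ℝ)-2) ≤ ((d:ℝ)-1) * (ℓ₀:ℝ)^(2:ℕ) := by
      have e0 : (ℓ₀:ℝ)+(d:ℝ)-2 ≤ ((d:ℝ)-1) * (ℓ₀:ℝ) := by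
        have e00 := mul_nonneg (by linarith : (0:ℝ) ≤ (d:ℝ)-2)
          (by linarith : (0:ℝ) ≤ (ℓ₀:ℝ)-1)
        linarith [e00]
      have e1 : (ℓ₀:ℝ)*((ℓ₀:ℝ)+(d:ℝ)-2) ≤ (ℓ₀:ℝ)*(((d:ℝ)-1) * (ℓ₀:ℝ)) :=
        mul_le_mul_of_nonneg_left e0 (by linarith)
      calc (ℓ₀:ℝ)*((ℓ₀:ℝ)+(d:ℝ)-2) ≤ (ℓ₀:ℝ)*(((d:ℝ)-1) * (ℓ₀:ℝ)) := e1
      _ = ((d:ℝ)-1) * (ℓ₀:ℝ)^(2:ℕ) := by ring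
    have hsplit : (ℓ₀:ℝ)^(2:ℕ) = (ℓ₀:ℝ)^q * (ℓ₀:ℝ)^(4/(m+2)) := by
      rw [← Real.rpow_add hℓ₀pos, ← Real.rpow_natCast (ℓ₀:ℝ) 2]
      congr 1
      rw [hqdef]; field_simp; ring
    have hpos4 : (0:ℝ) < (ℓ₀:ℝ)^(4/(m+2)) := Real.rpow_pos_of_pos hℓ₀pos _
    have hdiv : (ℓ₀:ℝ)*((ℓ₀:ℝ)+(d:ℝ)-2)/r₀^2 ≤ ((d:ℝ)-1) * (ℓ₀:ℝ)^q := by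
      rw [hr₀2, div_le_iff₀ hpos4]
      have e1 : ((d:ℝ)-1) * (ℓ₀:ℝ)^q * (ℓ₀:ℝ)^(4/(m+2)) = ((d:ℝ)-1) * (ℓ₀:ℝ)^(2:ℕ) := by
        rw [mul_assoc, ← hsplit]
      rw [e1]; exact hL2
    have hBq : v r₀ + (ℓ₀:ℝ)*((ℓ₀:ℝ)+(d:ℝ)-2)/r₀^2 ≤ B * (ℓ₀:ℝ)^q := by
      rw [hrmq] at hv1
      have : B * (ℓ₀:ℝ)^q = (1/c)*(ℓ₀:ℝ)^q + ((d:ℝ)-1)*(ℓ₀:ℝ)^q := by rw [hBdef]; ring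
      linarith
    have hℓq : (ℓ₀:ℝ)^q ≤ 4 * θ^q := by
      have e1 : (ℓ₀:ℝ)^q ≤ (2*θ)^q := Real.rpow_le_rpow (Nat.cast_nonneg _) hℓ2θ hq0.le
      have e2 : ((2:ℝ)*θ)^q = 2^q * θ^q := Real.mul_rpow (by norm_num) hθ0.le
      have e3 : (2:ℝ)^q ≤ 2^((2:ℝ)) := Real.rpow_le_rpow_of_exponent_le (by norm_num) hq2
      have e4 : (2:ℝ)^((2:ℝ)) = 4 := by
        rw [show ((2:ℝ)) = ((2:ℕ):ℝ) by norm_num, Real.rpow_natCast]; norm_num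
      have e5 : (0:ℝ) < θ^q := Real.rpow_pos_of_pos hθ0 _
      have e6 : (2:ℝ)^q ≤ 4 := by rw [← e4]; exact e3
      calc (ℓ₀:ℝ)^q ≤ (2*θ)^q := e1
      _ = 2^q * θ^q := e2
      _ ≤ 4 * θ^q := mul_le_mul_of_nonneg_right e6 e5.le
    have hθq : θ^q = lam/(8*B) := by
      rw [hθdef, ← Real.rpow_mul (div_nonneg hlam0.le (by linarith : (0:ℝ) ≤ 8*B)),
        show α*q = 1 by rw [mul_comm]; exact hqα, Real.rpow_one]
    have hfin : B * (ℓ₀:ℝ)^q < lam := by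
      have e1 : B * (ℓ₀:ℝ)^q ≤ B * (4*θ^q) := mul_le_mul_of_nonneg_left hℓq hB0.le
      rw [hθq] at e1
      have e2 : B * (4*(lam/(8*B))) = lam/2 := by field_simp; ring
      linarith
    linarith
  set S := {ℓ : ℕ | 1 ≤ ℓ ∧
    sInf ((fun r : ℝ => v r + (ℓ : ℝ) * ((ℓ : ℝ) + (d : ℝ) - 2) / r ^ 2) ''
      Set.Ioi 0) < lam} with hSdef
  have hmemS : ∀ ℓ ∈ S, (ℓ:ℝ) ≤ (2/a)^α * lam^α := by
    rintro ℓ ⟨hℓ1, hℓlt⟩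
    have h1 := key ℓ hℓ1
    have h2 : a * (ℓ:ℝ)^q ≤ 2*lam := by linarith
    have h3 : (ℓ:ℝ)^q ≤ 2*lam/a := by
      rw [le_div_iff₀ ha0]; linarith
    have h4 := Real.rpow_le_rpow (Real.rpow_nonneg (Nat.cast_nonneg _) q) h3 hα0.le
    rwa [← Real.rpow_mul (Nat.cast_nonneg _), hqα, Real.rpow_one,
      show 2*lam/a = (2/a)*lam by ring,
      Real.mul_rpow (div_nonneg (by norm_num) ha0.le) hlam0.le] at h4
  have hbddS : BddAbove S := by
    refine ⟨⌈(2/a)^α * lam^α⌉₊, fun ℓ hℓ => ?_⟩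
    have h1 := le_trans (hmemS ℓ hℓ) (Nat.le_ceil _)
    exact_mod_cast h1
  have hℓ₀S : ℓ₀ ∈ S := ⟨hℓ₀1, hub⟩
  have hpS : sSup S ∈ S := Nat.sSup_mem ⟨ℓ₀, hℓ₀S⟩ hbddS
  constructor
  · have h1 : (ℓ₀:ℝ) ≤ ((sSup S : ℕ) : ℝ) := by exact_mod_cast le_csSup hbddS hℓ₀S
    have h2 : (1/K) * lam^α ≤ θ := by
      rw [hθdef, Real.div_rpow hlam0.le (by linarith : (0:ℝ) ≤ 8*B)]
      have hKge : (8*B)^α ≤ K := by rw [hKdef]; exact le_max_left _ _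
      have h8B : (0:ℝ) < (8*B)^α := Real.rpow_pos_of_pos (by linarith) _
      have h5 := mul_le_mul_of_nonneg_right (inv_anti₀ h8B hKge)
        (Real.rpow_nonneg hlam0.le α)
      calc (1/K) * lam^α = K⁻¹ * lam^α := by rw [one_div]
      _ ≤ ((8*B)^α)⁻¹ * lam^α := h5
      _ = lam^α/(8*B)^α := by rw [div_eq_mul_inv, mul_comm]
    linarith
  · have h1 := hmemS _ hpS
    have h2 : (2/a)^α ≤ K := by rw [hKdef]; exact le_max_right _ _
    have h3 : (2/a)^α * lam^α ≤ K * lam^α :=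
      mul_le_mul_of_nonneg_right h2 (Real.rpow_nonneg hlam0.le _)
    linarith
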